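/- Let G be a group, ℚ[G] its rational group algebra and Δ its augmentation ideal. For every i ≥ 1, if g belongs to the i-th term γ_i G of the lower central series of G, then g − 1 ∈ Δ^i. That is, γ_i G ⊆ D_i G. -/

import Mathlib

/-- The augmentation map `ℚ[G] → ℚ`, sending each `g ∈ G` to `1`. -/
noncomputable def augMap (G : Type*) [Group G] : MonoidAlgebra ℚ G →ₐ[ℚ] ℚ :=
  MonoidAlgebra.lift ℚ ℚ G 1

/-- The augmentation ideal `Δ ⊆ ℚ[G]`. -/
noncomputable def augIdeal (G : Type*) [Group G] : Ideal (MonoidAlgebra ℚ G) :=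
  RingHom.ker (augMap G)

lemma mem_augIdeal_iff {G : Type*} [Group G] (x : MonoidAlgebra ℚ G) :
    x ∈ augIdeal G ↔ augMap G x = 0 := Iff.rfl

lemma of_sub_one_mem_augIdeal {G : Type*} [Group G] (g : G) :
    MonoidAlgebra.of ℚ G g - 1 ∈ augIdeal G := by
  rw [mem_augIdeal_iff, map_sub, map_one]
  simp [augMap]

/-- The augmentation ideal is a two-sided ideal: closed under right multiplication. -/
lemma augIdeal_mul_mem {G : Type*} [Group G] {x : MonoidAlgebra ℚ G}
    (hx : x ∈ augIdeal G) (r : MonoidAlgebra ℚ G) : x * r ∈ augIdeal G := by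
  rw [mem_augIdeal_iff] at hx ⊢
  rw [map_mul, hx, zero_mul]

/-- Powers of the augmentation ideal are closed under right multiplication. -/
lemma pow_augIdeal_mul_mem {G : Type*} [Group G] (k : ℕ) {z : MonoidAlgebra ℚ G}
    (hz : z ∈ augIdeal G ^ (k + 1)) (r : MonoidAlgebra ℚ G) :
    z * r ∈ augIdeal G ^ (k + 1) := by
  rw [Submodule.pow_succ] at hz ⊢
  refine Submodule.mul_induction_on (C := fun w => w * r ∈ augIdeal G ^ k * augIdeal G)
    hz (fun m hm n hn => ?_) (fun x y hx hy => ?_)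
  · show m * n * r ∈ augIdeal G ^ k * augIdeal G
    rw [mul_assoc]
    exact Submodule.mul_mem_mul hm (augIdeal_mul_mem hn r)
  · show (x + y) * r ∈ augIdeal G ^ k * augIdeal G
    rw [add_mul]
    exact add_mem hx hy

/-- `Δ * Δ^k ⊆ Δ^(k+1)`. -/
lemma augIdeal_mul_pow_mem {G : Type*} [Group G] {a : MonoidAlgebra ℚ G}
    (ha : a ∈ augIdeal G) :
    ∀ k, ∀ b ∈ augIdeal G ^ k, a * b ∈ augIdeal G ^ (k + 1) := by
  intro k
  induction k with
  | zero =>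
    intro b _
    have h1 : augIdeal G ^ (0 + 1) = augIdeal G := by rw [zero_add, Submodule.pow_one]
    rw [h1]
    exact augIdeal_mul_mem ha b
  | succ k ih =>
    intro b hb
    rw [Submodule.pow_succ] at hb
    refine Submodule.mul_induction_on
      (C := fun w => a * w ∈ augIdeal G ^ (k + 1 + 1))
      hb (fun m hm n hn => ?_) (fun x y hx hy => ?_)
    · show a * (m * n) ∈ augIdeal G ^ (k + 1 + 1)
      rw [← mul_assoc, Submodule.pow_succ]
      exact Submodule.mul_mem_mul (ih m hm) hn
    · show a * (x + y) ∈ augIdeal G ^ (k + 1 + 1)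
      rw [mul_add]
      exact add_mem hx hy

/-- The `(i+1)`-st dimension subgroup of `G`. -/
noncomputable def dimSub (G : Type*) [Group G] (i : ℕ) : Subgroup G where
  carrier := {g | MonoidAlgebra.of ℚ G g - 1 ∈ augIdeal G ^ (i + 1)}
  one_mem' := by
    simp only [Set.mem_setOf_eq, map_one, sub_self]
    exact zero_mem _
  mul_mem' := by
    intro a b ha hb
    have ha' : MonoidAlgebra.of ℚ G a - 1 ∈ augIdeal G ^ (i + 1) := ha
    have hb' : MonoidAlgebra.of ℚ G b - 1 ∈ augIdeal G ^ (i + 1) := hb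
    have h : MonoidAlgebra.of ℚ G (a * b) - 1 =
        (MonoidAlgebra.of ℚ G a - 1) * (MonoidAlgebra.of ℚ G b - 1)
        + (MonoidAlgebra.of ℚ G a - 1) + (MonoidAlgebra.of ℚ G b - 1) := by
      rw [map_mul]; noncomm_ring
    show MonoidAlgebra.of ℚ G (a * b) - 1 ∈ augIdeal G ^ (i + 1)
    rw [h]
    exact add_mem (add_mem (pow_augIdeal_mul_mem i ha' _) ha') hb'
  inv_mem' := by
    intro a ha
    have ha' : MonoidAlgebra.of ℚ G a - 1 ∈ augIdeal G ^ (i + 1) := ha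
    have h : MonoidAlgebra.of ℚ G a⁻¹ - 1 =
        -(MonoidAlgebra.of ℚ G a⁻¹ * (MonoidAlgebra.of ℚ G a - 1)) := by
      rw [mul_sub, ← map_mul, inv_mul_cancel, map_one, mul_one, neg_sub]
    show MonoidAlgebra.of ℚ G a⁻¹ - 1 ∈ augIdeal G ^ (i + 1)
    rw [h]
    exact neg_mem (Ideal.mul_mem_left _ _ ha')

open scoped commutatorElement in
lemma lcs_le_dimSub (G : Type*) [Group G] :
    ∀ n, (⊤ : Subgroup G).lowerCentralSeries n ≤ dimSub G n := by
  intro n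
  induction n with
  | zero =>
    intro g _
    show MonoidAlgebra.of ℚ G g - 1 ∈ augIdeal G ^ (0 + 1)
    have h1 : augIdeal G ^ (0 + 1) = augIdeal G := by rw [zero_add, Submodule.pow_one]
    rw [h1]
    exact of_sub_one_mem_augIdeal g
  | succ n ih =>
    show ⁅(⊤ : Subgroup G).lowerCentralSeries n, (⊤ : Subgroup G)⁆ ≤ dimSub G (n + 1)
    rw [Subgroup.commutator_le]
    intro x hx y _
    set X := MonoidAlgebra.of ℚ G x with hXdef
    set Y := MonoidAlgebra.of ℚ G y with hYdef
    set X' := MonoidAlgebra.of ℚ G x⁻¹ with hX'def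
    set Y' := MonoidAlgebra.of ℚ G y⁻¹ with hY'def
    have hXX' : X * X' = 1 := by rw [hXdef, hX'def, ← map_mul, mul_inv_cancel, map_one]
    have hYY' : Y * Y' = 1 := by rw [hYdef, hY'def, ← map_mul, mul_inv_cancel, map_one]
    have hX2 : ∀ z, X * (X' * z) = z := fun z => by rw [← mul_assoc, hXX', one_mul]
    have key : MonoidAlgebra.of ℚ G ⁅x, y⁆ - 1 = (X * Y - Y * X) * (X' * Y') := by
      rw [commutatorElement_def]
      rw [map_mul, map_mul, map_mul, ← hXdef, ← hYdef, ← hX'def, ← hY'def]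
      rw [sub_mul, mul_assoc, mul_assoc, mul_assoc, hX2, hYY']
    have hX1 : X - 1 ∈ augIdeal G ^ (n + 1) := ih hx
    have hmemXY : (X - 1) * (Y - 1) ∈ augIdeal G ^ (n + 1 + 1) := by
      rw [Submodule.pow_succ]
      exact Submodule.mul_mem_mul hX1 (of_sub_one_mem_augIdeal y)
    have hmemYX : (Y - 1) * (X - 1) ∈ augIdeal G ^ (n + 1 + 1) :=
      augIdeal_mul_pow_mem (of_sub_one_mem_augIdeal y) (n + 1) _ hX1
    have hcomm : X * Y - Y * X = (X - 1) * (Y - 1) - (Y - 1) * (X - 1) := by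
      noncomm_ring
    show MonoidAlgebra.of ℚ G ⁅x, y⁆ - 1 ∈ augIdeal G ^ (n + 1 + 1)
    rw [key, hcomm]
    exact pow_augIdeal_mul_mem (n + 1) (sub_mem hmemXY hmemYX) _

/-- `γ_i G ⊆ D_i G`: if `g` lies in the `i`-th term of the lower central series, then
`g - 1 ∈ Δ^i`.  (Here `γ_i G` is `lowerCentralSeries G (i - 1)` since Mathlib's lower
central series starts at `⊤` at index 0.) -/
theorem lowerCentralSeries_le_dimensionSubgroup (G : Type*) [Group G] (i : ℕ) (hi : 1 ≤ i)
    (g : G) (hg : g ∈ (⊤ : Subgroup G).lowerCentralSeries (i - 1)) :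
    MonoidAlgebra.of ℚ G g - 1 ∈ augIdeal G ^ i := by
  have h : i = (i - 1) + 1 := (Nat.succ_pred_eq_of_pos hi).symm
  rw [h]
  exact lcs_le_dimSub G (i - 1) hg
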